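/- For every natural number r ≥ 1, the polynomial (β² − 64)^{⌈r/2⌉} belongs to the ideal J̄_r of ℂ[α,β], where ⌈r/2⌉ denotes the least integer ≥ r/2. -/
import Mathlib


open MvPolynomial

/-- The pair (R̄¹_r, R̄²_r) of polynomials in ℂ[α,β] (α = X 0, β = X 1), defined by
R̄¹_0 = 1, R̄²_0 = 0 and the recursion R̄¹_{r+1} = α·R̄¹_r + r²·R̄²_r,
R̄²_{r+1} = (β + (−1)^{r+1}·8)·R̄¹_r. -/
noncomputable def Rb : ℕ → MvPolynomial (Fin 2) ℂ × MvPolynomial (Fin 2) ℂ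
  | 0 => (1, 0)
  | (r + 1) =>
      (X 0 * (Rb r).1 + C ((r : ℂ) ^ 2) * (Rb r).2,
       (X 1 + C ((-1 : ℂ) ^ (r + 1) * 8)) * (Rb r).1)

/-- The ideal J̄_r = (R̄¹_r, R̄²_r) ⊆ ℂ[α,β]. -/
noncomputable def Jb (r : ℕ) : Ideal (MvPolynomial (Fin 2) ℂ) :=
  Ideal.span {(Rb r).1, (Rb r).2}

lemma cmem {k : ℂ} (hk : k ≠ 0) {I : Ideal (MvPolynomial (Fin 2) ℂ)}
    {x : MvPolynomial (Fin 2) ℂ} (h : C k * x ∈ I) : x ∈ I := by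
  have h2 := I.mul_mem_left (C k⁻¹) h
  rwa [← mul_assoc, ← C_mul, inv_mul_cancel₀ hk, C_1, one_mul] at h2

lemma hneg (r : ℕ) : ((-1 : MvPolynomial (Fin 2) ℂ)) ^ r * (-1) ^ r = 1 := by
  rw [← mul_pow]; norm_num

lemma key (r : ℕ) (hr : 1 ≤ r) {P : MvPolynomial (Fin 2) ℂ} (hP : P ∈ Jb r) :
    ((X 1 : MvPolynomial (Fin 2) ℂ) ^ 2 - C 64) * P ∈ Jb (r + 2) := by
  have hu := hneg r
  have h1 : ((X 1 : MvPolynomial (Fin 2) ℂ) ^ 2 - C 64) * (Rb r).1 ∈ Jb (r + 2) := by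
    apply cmem (k := ((r : ℂ) + 1) ^ 2) (pow_ne_zero _ (by have := Nat.cast_add_one_ne_zero (R := ℂ) r; push_cast at this ⊢; exact this))
    rw [Jb, Ideal.mem_span_pair]
    refine ⟨X 1 + C ((-1 : ℂ) ^ r * 8), -(X 0), ?_⟩
    simp only [Rb, map_mul, map_pow, map_add, map_neg, map_one, map_natCast, map_ofNat]
    push_cast
    linear_combination (-(64 : MvPolynomial (Fin 2) ℂ)) * (((r : MvPolynomial (Fin 2) ℂ)) + 1) ^ 2 * (Rb r).1 * hu
  have h2 : ((X 1 : MvPolynomial (Fin 2) ℂ) ^ 2 - C 64) * (Rb r).2 ∈ Jb (r + 2) := by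
    apply cmem (k := ((r : ℂ)) ^ 2) (pow_ne_zero _ (Nat.cast_ne_zero.mpr (by omega)))
    have m2 : (Rb (r + 2)).2 ∈ Jb (r + 2) := Ideal.subset_span (by simp)
    have h3 := (Jb (r + 2)).sub_mem
      ((Jb (r + 2)).mul_mem_left (X 1 - C ((-1 : ℂ) ^ r * 8)) m2)
      ((Jb (r + 2)).mul_mem_left (X 0) h1)
    convert h3 using 1
    simp only [Rb, map_mul, map_pow, map_add, map_neg, map_one, map_natCast, map_ofNat]
    linear_combination (64 : MvPolynomial (Fin 2) ℂ) * (X 0 * (Rb r).1 + (r:MvPolynomial (Fin 2) ℂ)^2 * (Rb r).2) * hu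
  rw [Jb, Ideal.mem_span_pair] at hP
  obtain ⟨y, z, rfl⟩ := hP
  have h4 := (Jb (r + 2)).add_mem ((Jb (r + 2)).mul_mem_left y h1) ((Jb (r + 2)).mul_mem_left z h2)
  convert h4 using 1
  ring

/-- For every r ≥ 1, the polynomial (β² − 64)^⌈r/2⌉ belongs to the ideal J̄_r of ℂ[α,β]
(here ⌈r/2⌉ = (r+1)/2 in natural-number division). -/
theorem stmt17 (r : ℕ) (hr : 1 ≤ r) :
    ((X 1 : MvPolynomial (Fin 2) ℂ) ^ 2 - C 64) ^ ((r + 1) / 2) ∈ Jb r := by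
  induction r using Nat.strong_induction_on with
  | _ r ih =>
    match r, hr with
    | 1, _ =>
      rw [Jb, show (1+1)/2 = 1 from rfl, pow_one, Ideal.mem_span_pair]
      refine ⟨0, X 1 + C 8, ?_⟩
      simp only [Rb, map_mul, map_pow, map_add, map_neg, map_one, map_natCast, map_ofNat]
      push_cast
      ring
    | 2, _ =>
      rw [Jb, show (2+1)/2 = 1 from rfl, pow_one, Ideal.mem_span_pair]
      refine ⟨X 1 + C 8, -(X 0), ?_⟩
      simp only [Rb, map_mul, map_pow, map_add, map_neg, map_one, map_natCast, map_ofNat]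
      push_cast
      ring
    | (r + 3), _ =>
      have prev := ih (r + 1) (by omega) (by omega)
      have he : (r + 3 + 1) / 2 = (r + 1 + 1) / 2 + 1 := by omega
      rw [he, pow_succ, mul_comm]
      exact key (r + 1) (by omega) prev
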